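/- Let 1 ≤ p < ∞, σ ∈ ℝ, let U be an open subset of the complex weighted sequence space ℓ_ℂ^{σ,p}, let (ω_n^∘)_{n≥1} be real constants, and let ω^⋆ : U → ℓ_ℂ^∞ be an analytic map with components ω_n^⋆. Then for every T > 0 the map S : U → C([−T,T], ℓ_ℂ^{σ,p}) defined by S(z) = (t ↦ (e^{i(ω_n^∘ + ω_n^⋆(z)) t} z_n)_{n≥1}) is well defined and analytic, where C([−T,T], ℓ_ℂ^{σ,p}) carries the supremum norm. -/

import Mathlib

open scoped ENNReal

set_option maxHeartbeats 1000000
set_option synthInstance.maxHeartbeats 400000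

/-- The sequence space `ℓ^p(ℕ₊, ℂ)` (the weighted space `ℓ_ℂ^{σ,p}` is isometrically
identified with it via the weight `n^σ`). -/
noncomputable abbrev SeqSp (p : ℝ≥0∞) := lp (fun _ : ℕ+ => ℂ) p

namespace Stmt12Aux

variable {p : ℝ≥0∞} [Fact (1 ≤ p)]

lemma toReal_pos (hp : p ≠ ⊤) : 0 < p.toReal :=
  ENNReal.toReal_pos (zero_lt_one.trans_le (Fact.out : 1 ≤ p)).ne' hp

lemma memℓp_mul (hp : p ≠ ⊤) (v : SeqSp ⊤) (f : SeqSp p) :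
    Memℓp (fun n => v.1 n * f.1 n) p := by
  have hq := toReal_pos (p := p) hp
  refine memℓp_gen ?_
  have hs : Summable fun n : ℕ+ => ‖v‖ ^ p.toReal * ‖f.1 n‖ ^ p.toReal :=
    ((lp.memℓp f).summable hq).mul_left _
  refine hs.of_nonneg_of_le (fun n => Real.rpow_nonneg (norm_nonneg _) _) fun n => ?_
  rw [← Real.mul_rpow (norm_nonneg _) (norm_nonneg _)]
  refine Real.rpow_le_rpow (norm_nonneg _) ?_ hq.le
  rw [norm_mul]
  exact mul_le_mul_of_nonneg_right (lp.norm_apply_le_norm ENNReal.top_ne_zero v n)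
    (norm_nonneg _)

/-- Pointwise multiplication of an `ℓ^∞` sequence with an `ℓ^p` sequence. -/
noncomputable def mulSeq (hp : p ≠ ⊤) (v : SeqSp ⊤) (f : SeqSp p) : SeqSp p :=
  ⟨fun n => v.1 n * f.1 n, memℓp_mul hp v f⟩

@[simp] lemma mulSeq_apply (hp : p ≠ ⊤) (v : SeqSp ⊤) (f : SeqSp p) (n : ℕ+) :
    (mulSeq hp v f).1 n = v.1 n * f.1 n := rfl

lemma coe_mulSeq (hp : p ≠ ⊤) (v : SeqSp ⊤) (f : SeqSp p) :
    ⇑(mulSeq hp v f) = fun n => v.1 n * f.1 n := rfl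

lemma norm_mulSeq_le (hp : p ≠ ⊤) (v : SeqSp ⊤) (f : SeqSp p) :
    ‖mulSeq hp v f‖ ≤ ‖v‖ * ‖f‖ := by
  have hq := toReal_pos (p := p) hp
  refine lp.norm_le_of_forall_sum_le hq (mul_nonneg (norm_nonneg _) (norm_nonneg _)) fun s => ?_
  rw [Real.mul_rpow (norm_nonneg _) (norm_nonneg _)]
  calc ∑ n ∈ s, ‖(mulSeq hp v f) n‖ ^ p.toReal
      ≤ ∑ n ∈ s, ‖v‖ ^ p.toReal * ‖f n‖ ^ p.toReal := by
        refine Finset.sum_le_sum fun n _ => ?_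
        rw [← Real.mul_rpow (norm_nonneg _) (norm_nonneg _)]
        refine Real.rpow_le_rpow (norm_nonneg _) ?_ hq.le
        rw [coe_mulSeq, norm_mul]
        exact mul_le_mul_of_nonneg_right (lp.norm_apply_le_norm ENNReal.top_ne_zero v n)
          (norm_nonneg _)
    _ = ‖v‖ ^ p.toReal * ∑ n ∈ s, ‖f n‖ ^ p.toReal := (Finset.mul_sum _ _ _).symm
    _ ≤ ‖v‖ ^ p.toReal * ‖f‖ ^ p.toReal := by
        refine mul_le_mul_of_nonneg_left ?_ (Real.rpow_nonneg (norm_nonneg _) _)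
        exact lp.sum_rpow_le_norm_rpow hq f s

variable (p) in
/-- Pointwise multiplication as a continuous bilinear map `ℓ^∞ × ℓ^p → ℓ^p`. -/
noncomputable def mulCLM (hp : p ≠ ⊤) : SeqSp ⊤ →L[ℂ] SeqSp p →L[ℂ] SeqSp p :=
  LinearMap.mkContinuous₂
    { toFun := fun v =>
        { toFun := fun f => mulSeq hp v f
          map_add' := fun f g => by
            apply lp.ext
            funext n
            simp only [coe_mulSeq, lp.coeFn_add]
            exact mul_add _ _ _
          map_smul' := fun c f => by
            apply lp.ext
            funext n
            simp [coe_mulSeq, lp.coeFn_smul, Pi.smul_apply, smul_eq_mul]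
            ring }
      map_add' := fun v w => by
        apply LinearMap.ext
        intro f
        apply lp.ext
        funext n
        show (v + w).1 n * f.1 n = v.1 n * f.1 n + w.1 n * f.1 n
        exact add_mul _ _ _
      map_smul' := fun c v => by
        apply LinearMap.ext
        intro f
        apply lp.ext
        funext n
        simp [coe_mulSeq, lp.coeFn_smul, Pi.smul_apply, smul_eq_mul]
        ring }
    1 (fun v f => by rw [one_mul]; exact norm_mulSeq_le hp v f)

@[simp] lemma mulCLM_apply (hp : p ≠ ⊤) (v : SeqSp ⊤) (f : SeqSp p) :
    mulCLM p hp v f = mulSeq hp v f := rfl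

/-- The unimodular multiplier sequence `n ↦ exp(i ω₀ₙ t)`, as an element of `ℓ^∞`. -/
noncomputable def uLp (ω₀ : ℕ+ → ℝ) (t : ℝ) : SeqSp ⊤ :=
  ⟨fun n => Complex.exp (Complex.I * (ω₀ n : ℂ) * (t : ℂ)),
    memℓp_infty ⟨1, by
      rintro x ⟨n, rfl⟩
      simp only
      rw [show Complex.I * (ω₀ n : ℂ) * (t : ℂ) = ((ω₀ n * t : ℝ) : ℂ) * Complex.I by
        push_cast; ring]
      rw [Complex.norm_exp_ofReal_mul_I]⟩⟩

@[simp] lemma uLp_apply (ω₀ : ℕ+ → ℝ) (t : ℝ) (n : ℕ+) :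
    (uLp ω₀ t).1 n = Complex.exp (Complex.I * (ω₀ n : ℂ) * (t : ℂ)) := rfl

lemma norm_uLp_apply (ω₀ : ℕ+ → ℝ) (t : ℝ) (n : ℕ+) : ‖(uLp ω₀ t).1 n‖ = 1 := by
  rw [uLp_apply, show Complex.I * (ω₀ n : ℂ) * (t : ℂ) = ((ω₀ n * t : ℝ) : ℂ) * Complex.I by
    push_cast; ring]
  rw [Complex.norm_exp_ofReal_mul_I]

lemma norm_uLp_le (ω₀ : ℕ+ → ℝ) (t : ℝ) : ‖uLp ω₀ t‖ ≤ 1 :=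
  lp.norm_le_of_forall_le zero_le_one fun n => le_of_eq (norm_uLp_apply ω₀ t n)

lemma mulCLM_single (hp : p ≠ ⊤) (v : SeqSp ⊤) (n : ℕ+) (a : ℂ) :
    mulCLM p hp v (lp.single p n a) = v.1 n • lp.single p n a := by
  apply lp.ext
  funext j
  rw [lp.coeFn_smul]
  by_cases h : j = n
  · subst h
    simp [coe_mulSeq, lp.single_apply_self, smul_eq_mul]
  · simp [coe_mulSeq, lp.single_apply, h, smul_eq_mul]

lemma continuous_mul_uLp (hp : p ≠ ⊤) (ω₀ : ℕ+ → ℝ) (f : SeqSp p) :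
    Continuous fun t : ℝ => mulCLM p hp (uLp ω₀ t) f := by
  have hsum := lp.hasSum_single hp f
  have hTU : TendstoUniformly (fun (s : Finset ℕ+) (t : ℝ) =>
      mulCLM p hp (uLp ω₀ t) (∑ n ∈ s, lp.single p n (f.1 n)))
      (fun t : ℝ => mulCLM p hp (uLp ω₀ t) f) Filter.atTop := by
    rw [Metric.tendstoUniformly_iff]
    intro ε hε
    have hev : ∀ᶠ s : Finset ℕ+ in Filter.atTop,
        ‖(∑ n ∈ s, lp.single p n (f.1 n)) - f‖ < ε := by
      have := Metric.tendsto_nhds.mp hsum ε hε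
      simpa [dist_eq_norm] using this
    filter_upwards [hev] with s hs t
    rw [dist_eq_norm, ← map_sub]
    calc ‖mulCLM p hp (uLp ω₀ t) (f - ∑ n ∈ s, lp.single p n (f.1 n))‖
        ≤ ‖uLp ω₀ t‖ * ‖f - ∑ n ∈ s, lp.single p n (f.1 n)‖ := norm_mulSeq_le hp _ _
      _ ≤ 1 * ‖f - ∑ n ∈ s, lp.single p n (f.1 n)‖ :=
          mul_le_mul_of_nonneg_right (norm_uLp_le ω₀ t) (norm_nonneg _)
      _ = ‖(∑ n ∈ s, lp.single p n (f.1 n)) - f‖ := by rw [one_mul, norm_sub_rev]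
      _ < ε := hs
  refine hTU.continuous (Filter.Frequently.of_forall fun s => ?_)
  have heq : (fun t : ℝ => mulCLM p hp (uLp ω₀ t) (∑ n ∈ s, lp.single p n (f.1 n)))
      = fun t : ℝ => ∑ n ∈ s,
          Complex.exp (Complex.I * (ω₀ n : ℂ) * (t : ℂ)) • lp.single p n (f.1 n) := by
    funext t
    rw [map_sum]
    exact Finset.sum_congr rfl fun n _ => mulCLM_single hp _ n _
  rw [heq]
  refine continuous_finset_sum _ fun n _ =>
    continuous_smul.comp (Continuous.prodMk ?_ continuous_const)
  exact Complex.continuous_exp.comp (by fun_prop)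

variable (p) in
/-- The rotation with the constant frequencies `ω₀`, as a continuous linear map
into the space of continuous curves. -/
noncomputable def rotCLM (hp : p ≠ ⊤) (ω₀ : ℕ+ → ℝ) (T : ℝ) :
    SeqSp p →L[ℂ] C(Set.Icc (-T) T, SeqSp p) :=
  LinearMap.mkContinuous
    { toFun := fun z => ⟨fun t => mulCLM p hp (uLp ω₀ t.1) z,
        (continuous_mul_uLp hp ω₀ z).comp continuous_subtype_val⟩
      map_add' := fun z w => ContinuousMap.ext fun t =>
        map_add (mulCLM p hp (uLp ω₀ t.1)) z w
      map_smul' := fun c z => ContinuousMap.ext fun t =>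
        map_smul (mulCLM p hp (uLp ω₀ t.1)) c z }
    1 fun z => by
      rw [one_mul]
      refine (ContinuousMap.norm_le _ (norm_nonneg _)).mpr fun t => ?_
      calc ‖mulCLM p hp (uLp ω₀ t.1) z‖ ≤ ‖uLp ω₀ t.1‖ * ‖z‖ := norm_mulSeq_le hp _ _
        _ ≤ 1 * ‖z‖ := mul_le_mul_of_nonneg_right (norm_uLp_le ω₀ t.1) (norm_nonneg _)
        _ = ‖z‖ := one_mul _

lemma rotCLM_apply (hp : p ≠ ⊤) (ω₀ : ℕ+ → ℝ) (T : ℝ) (z : SeqSp p)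
    (t : Set.Icc (-T) T) : rotCLM p hp ω₀ T z t = mulCLM p hp (uLp ω₀ t.1) z := rfl

/-- `w ↦ (t ↦ (i t) • w)` as a continuous linear map into continuous curves in `ℓ^∞`. -/
noncomputable def linCLM (T : ℝ) (hT : 0 ≤ T) :
    SeqSp ⊤ →L[ℂ] C(Set.Icc (-T) T, SeqSp ⊤) :=
  LinearMap.mkContinuous
    { toFun := fun w => ⟨fun t => (Complex.I * (t.1 : ℂ)) • w,
        ((continuous_const.mul
          (Complex.continuous_ofReal.comp continuous_subtype_val)).smul continuous_const)⟩
      map_add' := fun z w => ContinuousMap.ext fun t => smul_add _ z w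
      map_smul' := fun c w => ContinuousMap.ext fun t => smul_comm _ c w }
    T fun w => by
      refine (ContinuousMap.norm_le _ (mul_nonneg hT (norm_nonneg _))).mpr fun t => ?_
      show ‖(Complex.I * (t.1 : ℂ)) • w‖ ≤ T * ‖w‖
      rw [norm_smul, norm_mul, Complex.norm_I, one_mul, Complex.norm_real, Real.norm_eq_abs]
      exact mul_le_mul_of_nonneg_right (abs_le.mpr ⟨t.2.1, t.2.2⟩) (norm_nonneg _)

lemma linCLM_apply (T : ℝ) (hT : 0 ≤ T) (w : SeqSp ⊤) (t : Set.Icc (-T) T) :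
    linCLM T hT w t = (Complex.I * (t.1 : ℂ)) • w := rfl

variable (p) in
/-- Pointwise-in-time multiplication of curves, as a continuous bilinear map. -/
noncomputable def cmulCLM (hp : p ≠ ⊤) (T : ℝ) :
    C(Set.Icc (-T) T, SeqSp ⊤) →L[ℂ]
      C(Set.Icc (-T) T, SeqSp p) →L[ℂ] C(Set.Icc (-T) T, SeqSp p) :=
  LinearMap.mkContinuous₂
    { toFun := fun a =>
        { toFun := fun g => ⟨fun t => mulCLM p hp (a t) (g t),
            ((mulCLM p hp).isBoundedBilinearMap.continuous).comp
              (a.continuous.prodMk g.continuous)⟩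
          map_add' := fun g₁ g₂ => ContinuousMap.ext fun t => by
            show mulCLM p hp (a t) ((g₁ + g₂) t)
              = mulCLM p hp (a t) (g₁ t) + mulCLM p hp (a t) (g₂ t)
            rw [ContinuousMap.add_apply, map_add]
          map_smul' := fun c g => ContinuousMap.ext fun t => by
            show mulCLM p hp (a t) ((c • g) t) = c • mulCLM p hp (a t) (g t)
            rw [ContinuousMap.smul_apply, map_smul] }
      map_add' := fun a b => LinearMap.ext fun g => ContinuousMap.ext fun t => by
        show mulCLM p hp ((a + b) t) (g t)
          = mulCLM p hp (a t) (g t) + mulCLM p hp (b t) (g t)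
        rw [ContinuousMap.add_apply, map_add, ContinuousLinearMap.add_apply]
      map_smul' := fun c a => LinearMap.ext fun g => ContinuousMap.ext fun t => by
        show mulCLM p hp ((c • a) t) (g t) = c • mulCLM p hp (a t) (g t)
        rw [ContinuousMap.smul_apply, map_smul, ContinuousLinearMap.smul_apply] }
    1 fun a g =>
      le_of_le_of_eq
        ((ContinuousMap.norm_le _ (mul_nonneg (norm_nonneg _) (norm_nonneg _))).mpr
          fun t => (norm_mulSeq_le hp (a t) (g t)).trans
            (mul_le_mul (a.norm_coe_le_norm t) (g.norm_coe_le_norm t)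
              (norm_nonneg _) (norm_nonneg _)))
        (congrArg (· * ‖g‖) (one_mul ‖a‖)).symm

lemma cmulCLM_apply (hp : p ≠ ⊤) (T : ℝ) (a : C(Set.Icc (-T) T, SeqSp ⊤))
    (g : C(Set.Icc (-T) T, SeqSp p)) (t : Set.Icc (-T) T) :
    cmulCLM p hp T a g t = mulCLM p hp (a t) (g t) := rfl

/-- Evaluation at a point as a ring homomorphism on continuous maps. -/
def evalRH (A : Type*) [NormedRing A] {X : Type*} [TopologicalSpace X] (t : X) :
    C(X, A) →+* A where
  toFun f := f t
  map_one' := rfl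
  map_mul' _ _ := rfl
  map_zero' := rfl
  map_add' _ _ := rfl

/-- Evaluation of an `ℓ^∞` sequence at an index, as a ring homomorphism. -/
def evalLp (n : ℕ+) : SeqSp ⊤ →+* ℂ where
  toFun f := f.1 n
  map_one' := congrFun lp.infty_coeFn_one n
  map_mul' f g := congrFun (lp.infty_coeFn_mul f g) n
  map_zero' := congrFun (lp.coeFn_zero (fun _ : ℕ+ => ℂ) ⊤) n
  map_add' f g := congrFun (lp.coeFn_add f g) n

lemma continuous_evalLp (n : ℕ+) : Continuous (evalLp n) := by
  refine (LipschitzWith.of_dist_le_mul (K := 1) fun f g => ?_).continuous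
  rw [dist_eq_norm, dist_eq_norm, NNReal.coe_one, one_mul]
  have h2 : (f - g).1 n = f.1 n - g.1 n := by
    have h := lp.coeFn_sub f g
    calc (f - g).1 n = (⇑f - ⇑g) n := by rw [← h]
      _ = f.1 n - g.1 n := rfl
  show ‖f.1 n - g.1 n‖ ≤ ‖f - g‖
  rw [← h2]
  exact lp.norm_apply_le_norm ENNReal.top_ne_zero (f - g) n

end Stmt12Aux

open Stmt12Aux

/-- Let `1 ≤ p < ∞`, `U` open in `ℓ_ℂ^{σ,p}`, `(ω_n^∘)` real constants and
`ω^⋆ : U → ℓ_ℂ^∞` analytic.  Then for every `T > 0` the solution map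
`S(z) = (t ↦ (e^{i(ω_n^∘ + ω_n^⋆(z)) t} z_n)_n)`, with values in
`C([−T,T], ℓ_ℂ^{σ,p})` with the supremum norm, is well defined and analytic on `U`. -/
theorem stmt12 (p : ℝ≥0∞) [Fact (1 ≤ p)] (hp : p ≠ ⊤)
    (U : Set (SeqSp p)) (hUopen : IsOpen U)
    (ω₀ : ℕ+ → ℝ)
    (Ω : SeqSp p → SeqSp ⊤)
    (hΩ : AnalyticOnNhd ℂ Ω U)
    (T : ℝ) (hT : 0 < T) :
    ∃ S : SeqSp p → C(Set.Icc (-T) T, SeqSp p),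
      (∀ z ∈ U, ∀ t : Set.Icc (-T) T, ∀ n : ℕ+,
        (S z t).1 n = Complex.exp (Complex.I * ((ω₀ n : ℂ) + (Ω z).1 n) * (t.1 : ℂ)) * z.1 n) ∧
      AnalyticOnNhd ℂ S U := by
  classical
  refine ⟨fun z => cmulCLM p hp T
      (NormedSpace.exp (linCLM T hT.le (Ω z))) (rotCLM p hp ω₀ T z), ?_, ?_⟩
  · intro z _ t n
    have h1 : NormedSpace.exp (linCLM T hT.le (Ω z)) t
        = NormedSpace.exp (linCLM T hT.le (Ω z) t) :=
      NormedSpace.map_exp (evalRH (SeqSp ⊤) t) (continuous_eval_const t) _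
    have h2 : (NormedSpace.exp (linCLM T hT.le (Ω z) t)).1 n
        = NormedSpace.exp ((linCLM T hT.le (Ω z) t).1 n) :=
      NormedSpace.map_exp (evalLp n) (continuous_evalLp n) _
    have h3 : ((linCLM T hT.le (Ω z) t)).1 n = Complex.I * (t.1 : ℂ) * (Ω z).1 n := by
      rw [linCLM_apply]
      have := lp.coeFn_smul (Complex.I * (t.1 : ℂ)) (Ω z)
      calc ((Complex.I * (t.1 : ℂ)) • Ω z).1 n
          = ((Complex.I * (t.1 : ℂ)) • ⇑(Ω z)) n := by rw [← this]
        _ = Complex.I * (t.1 : ℂ) * (Ω z).1 n := rfl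
    have key : ((fun z => cmulCLM p hp T
        (NormedSpace.exp (linCLM T hT.le (Ω z))) (rotCLM p hp ω₀ T z)) z t).1 n
        = Complex.exp (Complex.I * (t.1 : ℂ) * (Ω z).1 n)
            * (Complex.exp (Complex.I * (ω₀ n : ℂ) * (t.1 : ℂ)) * z.1 n) := by
      rw [cmulCLM_apply, rotCLM_apply]
      have : (mulCLM p hp (NormedSpace.exp (linCLM T hT.le (Ω z)) t)
          (mulCLM p hp (uLp ω₀ t.1) z)).1 n
          = (NormedSpace.exp (linCLM T hT.le (Ω z)) t).1 n
              * ((uLp ω₀ t.1).1 n * z.1 n) := rfl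
      rw [this, h1, h2, h3, uLp_apply, ← Complex.exp_eq_exp_ℂ]
    rw [key, show Complex.I * ((ω₀ n : ℂ) + (Ω z).1 n) * (t.1 : ℂ)
      = Complex.I * (t.1 : ℂ) * (Ω z).1 n + Complex.I * (ω₀ n : ℂ) * (t.1 : ℂ) by ring,
      Complex.exp_add,
      mul_assoc (Complex.exp (Complex.I * (t.1 : ℂ) * (Ω z).1 n))
        (Complex.exp (Complex.I * (ω₀ n : ℂ) * (t.1 : ℂ))) (z.1 n)]
  · intro z hz
    have hexp : AnalyticAt ℂ (NormedSpace.exp) (linCLM T hT.le (Ω z)) :=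
      NormedSpace.analyticAt_exp_of_mem_ball (𝕂 := ℂ) _ (by
        rw [NormedSpace.expSeries_radius_eq_top]; exact edist_lt_top _ _)
    have hlin : AnalyticAt ℂ (fun w : SeqSp ⊤ => linCLM T hT.le w) (Ω z) :=
      (linCLM T hT.le).analyticAt _
    have h0 : AnalyticAt ℂ (fun z => linCLM T hT.le (Ω z)) z := hlin.comp (hΩ z hz)
    have h1 : AnalyticAt ℂ (fun z => NormedSpace.exp (linCLM T hT.le (Ω z))) z :=
      AnalyticAt.comp (g := NormedSpace.exp) hexp h0
    have h2 : AnalyticAt ℂ (fun z => rotCLM p hp ω₀ T z) z := (rotCLM p hp ω₀ T).analyticAt z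
    exact ((cmulCLM p hp T).analyticAt_bilinear _).comp₂ h1 h2
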